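/- Assume d ≥ 2 and Tr(1 − Θ(1)) < ∞. Then both limits lim_{k→∞} Tr(1 − Θ^k(1))/(Σ_{j=0}^{k−1} d^j) and lim_{k→∞} (d−1)·Tr(1 − Θ^k(1))/d^k exist as finite real numbers and are equal. -/

import Mathlib

open Filter Finset ContinuousLinearMap
open scoped ENNReal

set_option maxHeartbeats 1000000
set_option synthInstance.maxHeartbeats 1000000
set_option linter.unusedSectionVars false
set_option linter.unusedVariables false

/-- The trace (in `[0,∞]`) of an operator on a complex Hilbert space, computed in a
Hilbert (orthonormal) basis `b`: `Tr A = ∑ᵢ ⟨bᵢ, A bᵢ⟩` (real part, clamped to `[0,∞]`).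
For a positive operator this is the usual trace, independent of the choice of basis. -/
noncomputable def opTrace {H : Type*} [NormedAddCommGroup H] [InnerProductSpace ℂ H]
    [CompleteSpace H] {ι : Type*} (b : HilbertBasis ι ℂ H) (A : H →L[ℂ] H) : ℝ≥0∞ :=
  ∑' i, ENNReal.ofReal (inner ℂ (b i) (A (b i)) : ℂ).re

section Helpers
variable {H : Type*} [NormedAddCommGroup H] [InnerProductSpace ℂ H] [CompleteSpace H]
variable {ι : Type*} (b : HilbertBasis ι ℂ H)

lemma inner_re_nonneg_of_nonneg {A : H →L[ℂ] H} (h : 0 ≤ A) (x : H) :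
    0 ≤ (inner ℂ x (A x) : ℂ).re := by
  have := ((ContinuousLinearMap.nonneg_iff_isPositive A).mp h).inner_nonneg_right x
  exact (Complex.nonneg_iff.mp this).1

lemma opTrace_add {A B : H →L[ℂ] H} (hA : 0 ≤ A) (hB : 0 ≤ B) :
    opTrace b (A + B) = opTrace b A + opTrace b B := by
  unfold opTrace
  rw [← ENNReal.tsum_add]
  congr 1; funext i
  rw [ContinuousLinearMap.add_apply, inner_add_right, Complex.add_re,
    ENNReal.ofReal_add (inner_re_nonneg_of_nonneg hA _) (inner_re_nonneg_of_nonneg hB _)]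

lemma opTrace_sum {m : ℕ} (f : Fin m → H →L[ℂ] H) (hf : ∀ j, 0 ≤ f j) :
    opTrace b (∑ j, f j) = ∑ j, opTrace b (f j) := by
  induction m with
  | zero => simp [opTrace]
  | succ m ih =>
    rw [Fin.sum_univ_castSucc, Fin.sum_univ_castSucc,
      opTrace_add b (Finset.sum_nonneg fun j _ => hf _) (hf _), ih _ (fun j => hf _)]

lemma opTrace_range_sum (f : ℕ → H →L[ℂ] H) (hf : ∀ j, 0 ≤ f j) (k : ℕ) :
    opTrace b (∑ j ∈ range k, f j) = ∑ j ∈ range k, opTrace b (f j) := by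
  induction k with
  | zero => simp [opTrace]
  | succ k ih =>
    rw [Finset.sum_range_succ, Finset.sum_range_succ,
      opTrace_add b (Finset.sum_nonneg fun j _ => hf _) (hf _), ih]

lemma parseval_ofReal (x : H) :
    ∑' i, ENNReal.ofReal (‖(inner ℂ (b i) x : ℂ)‖ ^ 2) = ENNReal.ofReal (‖x‖ ^ 2) := by
  have h : HasSum (fun i => ‖(inner ℂ (b i) x : ℂ)‖ ^ 2) (‖x‖ ^ 2) := by
    have h0 := b.hasSum_inner_mul_inner x x
    have h1 := h0.mapL Complex.reCLM
    have key : ∀ i : ι, Complex.reCLM ((inner ℂ x (b i) : ℂ) * inner ℂ (b i) x)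
        = ‖(inner ℂ (b i) x : ℂ)‖ ^ 2 := by
      intro i
      have : (inner ℂ x (b i) : ℂ) = starRingEnd ℂ (inner ℂ (b i) x) := by
        rw [inner_conj_symm]
      rw [this, RCLike.conj_mul]
      norm_cast
    have key2 : Complex.reCLM (inner ℂ x x : ℂ) = ‖x‖ ^ 2 := by
      have := inner_self_eq_norm_sq (𝕜 := ℂ) x
      simpa using this
    rw [← key2]
    exact HasSum.congr_fun h1 (fun i => (key i).symm)
  rw [← h.tsum_eq, ENNReal.ofReal_tsum_of_nonneg (fun i => by positivity) h.summable]

lemma opTrace_conj_eq (R s : H →L[ℂ] H) (hR : ContinuousLinearMap.adjoint R = R) :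
    opTrace b (s * (R * R) * star s) = ∑' i, ENNReal.ofReal (‖s (R (b i))‖ ^ 2) := by
  unfold opTrace
  have stepA : ∀ i, (inner ℂ (b i) ((s * (R * R) * star s) (b i)) : ℂ).re
      = ‖R ((ContinuousLinearMap.adjoint s) (b i))‖ ^ 2 := by
    intro i
    have e1 : (s * (R * R) * star s) (b i)
        = s (R (R ((ContinuousLinearMap.adjoint s) (b i)))) := by
      simp [ContinuousLinearMap.mul_apply, ContinuousLinearMap.star_eq_adjoint]
    rw [e1, ← ContinuousLinearMap.adjoint_inner_left s]
    set u := (ContinuousLinearMap.adjoint s) (b i)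
    have e2 : (inner ℂ u (R (R u)) : ℂ) = inner ℂ (R u) (R u) := by
      conv_lhs => rw [← ContinuousLinearMap.adjoint_inner_left R, hR]
    rw [e2]
    have := inner_self_eq_norm_sq (𝕜 := ℂ) (R u)
    simpa using this
  calc ∑' i, ENNReal.ofReal (inner ℂ (b i) ((s * (R * R) * star s) (b i)) : ℂ).re
      = ∑' i, ENNReal.ofReal (‖R ((ContinuousLinearMap.adjoint s) (b i))‖ ^ 2) := by
        congr 1; funext i; rw [stepA]
    _ = ∑' i, ∑' i', ENNReal.ofReal
          (‖(inner ℂ (b i') (R ((ContinuousLinearMap.adjoint s) (b i))) : ℂ)‖ ^ 2) := by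
        congr 1; funext i; rw [parseval_ofReal]
    _ = ∑' i', ∑' i, ENNReal.ofReal
          (‖(inner ℂ (b i') (R ((ContinuousLinearMap.adjoint s) (b i))) : ℂ)‖ ^ 2) :=
        ENNReal.tsum_comm
    _ = ∑' i', ∑' i, ENNReal.ofReal (‖(inner ℂ (b i) (s (R (b i'))) : ℂ)‖ ^ 2) := by
        congr 1; funext i'; congr 1; funext i
        have e3 : (inner ℂ (b i') (R ((ContinuousLinearMap.adjoint s) (b i))) : ℂ)
            = inner ℂ (s (R (b i'))) (b i) := by
          conv_lhs => rw [← ContinuousLinearMap.adjoint_inner_left R, hR,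
            ← ContinuousLinearMap.adjoint_inner_left (ContinuousLinearMap.adjoint s),
            ContinuousLinearMap.adjoint_adjoint]
        rw [e3, ← norm_inner_symm]
    _ = ∑' i', ENNReal.ofReal (‖s (R (b i'))‖ ^ 2) := by
        congr 1; funext i'; rw [parseval_ofReal]

lemma opTrace_kraus_le {n : ℕ} (t : Fin n → H →L[ℂ] H) (d : ℕ)
    (hpt : ∀ ξ : H, ∑ j, ‖t j ξ‖ ^ 2 ≤ (d : ℝ) * ‖ξ‖ ^ 2)
    (X : H →L[ℂ] H) (hX : 0 ≤ X) :
    opTrace b (∑ j, t j * X * star (t j)) ≤ d * opTrace b X := by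
  set R := CFC.sqrt X with hRdef
  have hRR : R * R = X := by
    conv_rhs => rw [← CFC.sq_sqrt (a := X) hX]
    rw [sq]
  have hRadj : ContinuousLinearMap.adjoint R = R := by
    have h1 : (0 : H →L[ℂ] H) ≤ R := CFC.sqrt_nonneg X
    have h2 := ((ContinuousLinearMap.nonneg_iff_isPositive _).mp h1).isSelfAdjoint
    rwa [← ContinuousLinearMap.star_eq_adjoint]
  have hpos : ∀ j, 0 ≤ t j * X * star (t j) := by
    intro j
    rw [ContinuousLinearMap.nonneg_iff_isPositive]
    have := ((ContinuousLinearMap.nonneg_iff_isPositive X).mp hX).conj_adjoint (t j)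
    simpa [ContinuousLinearMap.mul_def, ContinuousLinearMap.star_eq_adjoint, ContinuousLinearMap.comp_assoc] using this
  have hXb : ∀ i : ι, (inner ℂ (b i) (X (b i)) : ℂ).re = ‖R (b i)‖ ^ 2 := by
    intro i
    rw [← hRR]
    have e2 : (inner ℂ (b i) ((R * R) (b i)) : ℂ) = inner ℂ (R (b i)) (R (b i)) := by
      rw [ContinuousLinearMap.mul_apply]
      conv_lhs => rw [← ContinuousLinearMap.adjoint_inner_left R, hRadj]
    rw [e2]
    have := inner_self_eq_norm_sq (𝕜 := ℂ) (R (b i))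
    simpa using this
  calc opTrace b (∑ j, t j * X * star (t j))
      = ∑ j, opTrace b (t j * X * star (t j)) := opTrace_sum b _ hpos
    _ = ∑ j, ∑' i, ENNReal.ofReal (‖t j (R (b i))‖ ^ 2) := by
        refine Finset.sum_congr rfl fun j _ => ?_
        rw [← hRR]
        exact opTrace_conj_eq b R (t j) hRadj
    _ = ∑' i, ∑ j, ENNReal.ofReal (‖t j (R (b i))‖ ^ 2) :=
        (Summable.tsum_finsetSum fun _ _ => ENNReal.summable).symm
    _ = ∑' i, ENNReal.ofReal (∑ j, ‖t j (R (b i))‖ ^ 2) := by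
        congr 1; funext i
        rw [ENNReal.ofReal_sum_of_nonneg fun j _ => by positivity]
    _ ≤ ∑' i, ENNReal.ofReal ((d : ℝ) * ‖R (b i)‖ ^ 2) :=
        ENNReal.tsum_le_tsum fun i => ENNReal.ofReal_le_ofReal (hpt _)
    _ = ∑' i, (d : ℝ≥0∞) * ENNReal.ofReal (‖R (b i)‖ ^ 2) := by
        congr 1; funext i
        rw [ENNReal.ofReal_mul (by positivity), ENNReal.ofReal_natCast]
    _ = (d : ℝ≥0∞) * opTrace b X := by
        rw [ENNReal.tsum_mul_left]
        unfold opTrace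
        congr 1; congr 1; funext i; rw [hXb]

lemma finite_parseval {K : Submodule ℂ H} [FiniteDimensional ℂ K] (v : K) :
    ‖(v : H)‖ ^ 2 = ∑ p, ‖(inner ℂ ((stdOrthonormalBasis ℂ K p : H)) (v : H) : ℂ)‖ ^ 2 := by
  classical
  have h := (stdOrthonormalBasis ℂ K).sum_inner_mul_inner v v
  have h2 := congrArg Complex.re h
  have h3 : (inner ℂ (v : K) (v : K) : ℂ).re = ‖(v : H)‖ ^ 2 := by
    have h4 := inner_self_eq_norm_sq (𝕜 := ℂ) v
    simp only [RCLike.re_to_complex] at h4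
    rw [h4, Submodule.coe_norm]
  rw [Complex.re_sum] at h2
  rw [← h3, ← h2]
  refine Finset.sum_congr rfl fun p _ => ?_
  have : (inner ℂ (v : K) (stdOrthonormalBasis ℂ K p) : ℂ)
      = starRingEnd ℂ (inner ℂ (stdOrthonormalBasis ℂ K p) (v : K)) := by
    rw [inner_conj_symm]
  rw [this, RCLike.conj_mul]
  rw [← Submodule.coe_inner]
  norm_cast

lemma adjoint_sum_le {n : ℕ} (t : Fin n → H →L[ℂ] H)
    (hcontr : ∑ i, t i * star (t i) ≤ 1) (ζ : H) :
    ∑ j, ‖ContinuousLinearMap.adjoint (t j) ζ‖ ^ 2 ≤ ‖ζ‖ ^ 2 := by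
  rw [ContinuousLinearMap.le_def] at hcontr
  have h := hcontr.inner_nonneg_right ζ
  replace h := (Complex.nonneg_iff.mp h).1
  have e1 : (inner ℂ ζ (((1 : H →L[ℂ] H) - ∑ i, t i * star (t i)) ζ) : ℂ).re
      = ‖ζ‖ ^ 2 - ∑ j, ‖ContinuousLinearMap.adjoint (t j) ζ‖ ^ 2 := by
    rw [ContinuousLinearMap.sub_apply, inner_sub_right, Complex.sub_re]
    congr 1
    · have := inner_self_eq_norm_sq (𝕜 := ℂ) ζ
      simpa using this
    · rw [ContinuousLinearMap.sum_apply, inner_sum, Complex.re_sum]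
      refine Finset.sum_congr rfl fun j _ => ?_
      have e2 : (inner ℂ ζ ((t j * star (t j)) ζ) : ℂ)
          = inner ℂ (ContinuousLinearMap.adjoint (t j) ζ) (ContinuousLinearMap.adjoint (t j) ζ) := by
        rw [ContinuousLinearMap.mul_apply, ContinuousLinearMap.star_eq_adjoint,
          ← ContinuousLinearMap.adjoint_inner_left]
      rw [e2]
      have := inner_self_eq_norm_sq (𝕜 := ℂ) (ContinuousLinearMap.adjoint (t j) ζ)
      simpa using this
  rw [e1] at h
  linarith

lemma pointwise_dim_bound {n : ℕ} (t : Fin n → H →L[ℂ] H)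
    (hcontr : ∑ i, t i * star (t i) ≤ 1) (d : ℕ)
    (hd : d = Module.finrank ℂ (Submodule.span ℂ (Set.range t))) (hd2 : 2 ≤ d)
    (ξ : H) : ∑ j, ‖t j ξ‖ ^ 2 ≤ (d : ℝ) * ‖ξ‖ ^ 2 := by
  classical
  set W := Submodule.span ℂ (Set.range t) with hW
  haveI : FiniteDimensional ℂ W := FiniteDimensional.of_finrank_pos (by omega)
  let ev : (H →L[ℂ] H) →ₗ[ℂ] H :=
    { toFun := fun a => a ξ
      map_add' := fun a c => rfl
      map_smul' := fun c a => rfl }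
  set K := W.map ev with hK
  haveI : FiniteDimensional ℂ K := inferInstance
  have hmK : Module.finrank ℂ K ≤ d := hd ▸ Submodule.finrank_map_le ev W
  have hmem : ∀ j, t j ξ ∈ K := fun j =>
    Submodule.mem_map.mpr ⟨t j, Submodule.subset_span ⟨j, rfl⟩, rfl⟩
  set e := stdOrthonormalBasis ℂ K with he
  have step1 : ∀ j, ‖t j ξ‖ ^ 2 = ∑ p, ‖(inner ℂ ((e p : H)) (t j ξ) : ℂ)‖ ^ 2 := by
    intro j
    have := finite_parseval (H := H) (⟨t j ξ, hmem j⟩ : K)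
    simpa using this
  calc ∑ j, ‖t j ξ‖ ^ 2
      = ∑ j, ∑ p, ‖(inner ℂ ((e p : H)) (t j ξ) : ℂ)‖ ^ 2 :=
        Finset.sum_congr rfl fun j _ => step1 j
    _ = ∑ p, ∑ j, ‖(inner ℂ ((e p : H)) (t j ξ) : ℂ)‖ ^ 2 := Finset.sum_comm
    _ ≤ ∑ p : Fin (Module.finrank ℂ K), ‖ξ‖ ^ 2 := by
        refine Finset.sum_le_sum fun p _ => ?_
        have hb : ∀ j : Fin n, ‖(inner ℂ ((e p : H)) (t j ξ) : ℂ)‖ ^ 2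
            ≤ ‖ContinuousLinearMap.adjoint (t j) (e p : H)‖ ^ 2 * ‖ξ‖ ^ 2 := by
          intro j
          rw [← ContinuousLinearMap.adjoint_inner_left]
          have h1 := norm_inner_le_norm (𝕜 := ℂ) (ContinuousLinearMap.adjoint (t j) (e p : H)) ξ
          calc ‖(inner ℂ (ContinuousLinearMap.adjoint (t j) (e p : H)) ξ : ℂ)‖ ^ 2
              ≤ (‖ContinuousLinearMap.adjoint (t j) (e p : H)‖ * ‖ξ‖) ^ 2 := by
                apply pow_le_pow_left₀ (norm_nonneg _) h1
            _ = _ := by ring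
        calc ∑ j, ‖(inner ℂ ((e p : H)) (t j ξ) : ℂ)‖ ^ 2
            ≤ ∑ j, ‖ContinuousLinearMap.adjoint (t j) (e p : H)‖ ^ 2 * ‖ξ‖ ^ 2 :=
              Finset.sum_le_sum fun j _ => hb j
          _ = (∑ j, ‖ContinuousLinearMap.adjoint (t j) (e p : H)‖ ^ 2) * ‖ξ‖ ^ 2 := by
              rw [Finset.sum_mul]
          _ ≤ ‖(e p : H)‖ ^ 2 * ‖ξ‖ ^ 2 := by
              apply mul_le_mul_of_nonneg_right (adjoint_sum_le t hcontr _) (by positivity)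
          _ = ‖ξ‖ ^ 2 := by
              have hnorm : ‖(e p : H)‖ = 1 := by
                have h5 := e.orthonormal.1 p
                rw [Submodule.norm_coe]
                exact h5
              rw [hnorm]; ring
    _ = (Module.finrank ℂ K : ℝ) * ‖ξ‖ ^ 2 := by
        rw [Finset.sum_const, Finset.card_univ, Fintype.card_fin, nsmul_eq_mul]
    _ ≤ (d : ℝ) * ‖ξ‖ ^ 2 := by
        apply mul_le_mul_of_nonneg_right _ (by positivity)
        exact_mod_cast hmK

end Helpers

lemma weighted_avg_tendsto (d : ℕ) (hd2 : 2 ≤ d) (γ : ℕ → ℝ) (hnonneg : ∀ j, 0 ≤ γ j)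
    (hanti : ∀ j, γ (j + 1) ≤ γ j) :
    ∃ L : ℝ, 0 ≤ L ∧
      Filter.Tendsto (fun k => (∑ j ∈ range k, γ j * (d : ℝ) ^ j) /
        (∑ j ∈ range k, (d : ℝ) ^ j)) atTop (nhds L) := by
  have hγanti : Antitone γ := antitone_nat_of_succ_le hanti
  have hbdd : BddBelow (Set.range γ) := ⟨0, by rintro x ⟨j, rfl⟩; exact hnonneg j⟩
  set L := ⨅ j, γ j with hL
  have hLle : ∀ j, L ≤ γ j := fun j => ciInf_le hbdd j
  have hL0 : 0 ≤ L := le_ciInf hnonneg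
  have hγtend : Filter.Tendsto γ atTop (nhds L) := tendsto_atTop_ciInf hγanti hbdd
  set S : ℕ → ℝ := fun k => ∑ j ∈ range k, (d : ℝ) ^ j with hS
  set A : ℕ → ℝ := fun k => ∑ j ∈ range k, γ j * (d : ℝ) ^ j with hA
  have hdpos : (0 : ℝ) < d := by positivity
  have hdj1 : ∀ j : ℕ, (1 : ℝ) ≤ (d : ℝ) ^ j := fun j =>
    one_le_pow₀ (by exact_mod_cast Nat.one_le_of_lt hd2)
  have hSk : ∀ k : ℕ, (k : ℝ) ≤ S k := by
    intro k
    calc (k : ℝ) = ∑ j ∈ range k, (1 : ℝ) := by simp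
      _ ≤ S k := Finset.sum_le_sum fun j _ => hdj1 j
  have hSpos : ∀ k : ℕ, 1 ≤ k → 0 < S k := fun k hk =>
    lt_of_lt_of_le (by exact_mod_cast hk) (hSk k)
  have hlow : ∀ k : ℕ, L * S k ≤ A k := by
    intro k
    rw [hS, hA, Finset.mul_sum]
    exact Finset.sum_le_sum fun j _ => by
      have := hLle j
      nlinarith [pow_pos hdpos j]
  refine ⟨L, hL0, ?_⟩
  rw [Metric.tendsto_atTop]
  intro ε hε
  obtain ⟨N, hN⟩ := Metric.tendsto_atTop.mp hγtend (ε / 2) (by linarith)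
  have hγN : γ N < L + ε / 2 := by
    have := hN N le_rfl
    rw [Real.dist_eq, abs_lt] at this
    linarith
  set C := A N with hC
  have hC0 : 0 ≤ C := Finset.sum_nonneg fun j _ => mul_nonneg (hnonneg j) (by positivity)
  obtain ⟨M, hM⟩ := exists_nat_gt (C / (ε / 2))
  refine ⟨max (N + 1) (M + 1), fun k hk => ?_⟩
  have hk1 : N + 1 ≤ k := le_trans (le_max_left _ _) hk
  have hkM : M + 1 ≤ k := le_trans (le_max_right _ _) hk
  have hSkpos : 0 < S k := hSpos k (by omega)
  have hupp : A k ≤ C + (L + ε / 2) * S k := by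
    have hsplit : A k = C + ∑ j ∈ Finset.Ico N k, γ j * (d : ℝ) ^ j := by
      exact (Finset.sum_range_add_sum_Ico _ (by omega : N ≤ k)).symm
    rw [hsplit]
    have h1 : ∑ j ∈ Finset.Ico N k, γ j * (d : ℝ) ^ j
        ≤ ∑ j ∈ Finset.Ico N k, (L + ε / 2) * (d : ℝ) ^ j := by
      refine Finset.sum_le_sum fun j hj => ?_
      have hj1 : γ j ≤ γ N := hγanti (Finset.mem_Ico.mp hj).1
      nlinarith [pow_pos hdpos j]
    have h2 : ∑ j ∈ Finset.Ico N k, (L + ε / 2) * (d : ℝ) ^ j ≤ (L + ε / 2) * S k := by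
      rw [← Finset.mul_sum]
      apply mul_le_mul_of_nonneg_left _ (by linarith)
      have hsum : S k = (∑ j ∈ range N, (d : ℝ) ^ j) + ∑ j ∈ Finset.Ico N k, (d : ℝ) ^ j :=
        (Finset.sum_range_add_sum_Ico _ (by omega : N ≤ k)).symm
      have hpos0 : 0 ≤ ∑ j ∈ range N, (d : ℝ) ^ j := Finset.sum_nonneg fun j _ => by positivity
      linarith
    linarith
  rw [Real.dist_eq, abs_lt]
  have hge : L ≤ A k / S k := (le_div_iff₀ hSkpos).mpr (by linarith [hlow k])
  have hkpos : (0 : ℝ) < k := by exact_mod_cast (by omega : 0 < k)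
  have hCk : C / S k ≤ C / k := by gcongr; exact hSk k
  have hCk2 : C / (k : ℝ) < ε / 2 := by
    rw [div_lt_iff₀ hkpos]
    have hMk : C / (ε / 2) < (k : ℝ) := by
      calc C / (ε / 2) < (M : ℝ) := hM
        _ ≤ (k : ℝ) := by exact_mod_cast (by omega : M ≤ k)
    calc C = (C / (ε / 2)) * (ε / 2) := by field_simp
      _ < (k : ℝ) * (ε / 2) := by
          apply mul_lt_mul_of_pos_right hMk (by linarith)
      _ = ε / 2 * k := by ring
  have hle : A k / S k ≤ C / S k + (L + ε / 2) := by
    have h7 : A k / S k ≤ (C + (L + ε / 2) * S k) / S k := by gcongr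
    have h6 : (C + (L + ε / 2) * S k) / S k = C / S k + (L + ε / 2) := by rw [add_div, mul_div_assoc, div_self (ne_of_gt hSkpos), mul_one]
    linarith
  constructor
  · linarith
  · have : A k / S k < L + ε := by
      have := hCk.trans_lt hCk2
      linarith
    linarith


lemma ratio_eq (d : ℕ) (hd2 : 2 ≤ d) (x S : ℝ) (hS : S ≠ 0) (k : ℕ)
    (hgeom : S * ((d : ℝ) - 1) = (d : ℝ) ^ k - 1) :
    x / S * (1 - ((d : ℝ)⁻¹) ^ k) = ((d : ℝ) - 1) * x / (d : ℝ) ^ k := by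
  have hdR : (0 : ℝ) < d := by positivity
  have hdk : ((d : ℝ)) ^ k ≠ 0 := by positivity
  have h1 : 1 - ((d : ℝ)⁻¹) ^ k = ((d : ℝ) ^ k - 1) / (d : ℝ) ^ k := by
    rw [inv_pow]; field_simp
  rw [h1, ← hgeom]
  field_simp

/-- When `d ≥ 2` and `Tr(1 - Θ(1)) < ∞`, both `Tr(1 - Θ^k(1)) / ∑_{j<k} d^j` and
Kribs's expression `(d - 1) * Tr(1 - Θ^k(1)) / d^k` converge to the same finite limit. -/
theorem curvature_eq_kribs_curvature
    {H : Type*} [NormedAddCommGroup H] [InnerProductSpace ℂ H] [CompleteSpace H]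
    {ι : Type*} (b : HilbertBasis ι ℂ H)
    (n : ℕ) (t : Fin n → H →L[ℂ] H)
    (hcontr : ∑ i, t i * star (t i) ≤ 1)
    (Θ : (H →L[ℂ] H) → (H →L[ℂ] H))
    (hΘ : ∀ x, Θ x = ∑ i, t i * x * star (t i))
    (d : ℕ) (hd : d = Module.finrank ℂ (Submodule.span ℂ (Set.range t)))
    (hd2 : 2 ≤ d)
    (hfin : opTrace b (1 - Θ 1) ≠ ⊤) :
    ∃ K : ℝ≥0∞, K ≠ ⊤ ∧
      Filter.Tendsto
        (fun k => opTrace b (1 - Θ^[k] 1) / ∑ j ∈ Finset.range k, (d : ℝ≥0∞) ^ j)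
        Filter.atTop (nhds K) ∧
      Filter.Tendsto
        (fun k => ((d : ℝ≥0∞) - 1) * opTrace b (1 - Θ^[k] 1) / (d : ℝ≥0∞) ^ k)
        Filter.atTop (nhds K) := by
  have hpt := pointwise_dim_bound t hcontr d hd hd2
  set D : ℕ → (H →L[ℂ] H) := fun j => Θ^[j] 1 - Θ^[j + 1] 1 with hD
  have hΘsub : ∀ x y, Θ x - Θ y = Θ (x - y) := by
    intro x y
    rw [hΘ x, hΘ y, hΘ (x - y), ← Finset.sum_sub_distrib]
    refine Finset.sum_congr rfl fun i _ => ?_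
    rw [mul_sub, sub_mul]
  have hΘpos : ∀ X, 0 ≤ X → 0 ≤ Θ X := by
    intro X hX
    rw [hΘ X]
    refine Finset.sum_nonneg fun i _ => ?_
    rw [ContinuousLinearMap.nonneg_iff_isPositive]
    have := ((ContinuousLinearMap.nonneg_iff_isPositive X).mp hX).conj_adjoint (t i)
    simpa [ContinuousLinearMap.mul_def, ContinuousLinearMap.star_eq_adjoint, ContinuousLinearMap.comp_assoc] using this
  have hDsucc : ∀ j, D (j + 1) = Θ (D j) := by
    intro j
    show Θ^[j + 1] 1 - Θ^[j + 1 + 1] 1 = Θ (Θ^[j] 1 - Θ^[j + 1] 1)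
    rw [← hΘsub, ← Function.iterate_succ_apply' Θ j 1,
      ← Function.iterate_succ_apply' Θ (j + 1) 1]
  have hD0 : D 0 = 1 - Θ 1 := by
    show Θ^[0] 1 - Θ^[1] 1 = _
    rw [Function.iterate_one, Function.iterate_zero_apply]
  have hDpos : ∀ j, 0 ≤ D j := by
    intro j; induction j with
    | zero =>
      rw [hD0, sub_nonneg, hΘ 1]
      calc ∑ i, t i * 1 * star (t i) = ∑ i, t i * star (t i) := by
            refine Finset.sum_congr rfl fun i _ => by rw [mul_one]
        _ ≤ 1 := hcontr
    | succ j ih => rw [hDsucc]; exact hΘpos _ ih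
  set c : ℕ → ℝ≥0∞ := fun j => opTrace b (D j) with hc
  have hcrec : ∀ j, c (j + 1) ≤ d * c j := by
    intro j
    show opTrace b (D (j + 1)) ≤ _
    rw [hDsucc, hΘ]
    exact opTrace_kraus_le b t d hpt (D j) (hDpos j)
  have hcfin : ∀ j, c j ≠ ⊤ := by
    intro j; induction j with
    | zero => show opTrace b (D 0) ≠ ⊤; rw [hD0]; exact hfin
    | succ j ih =>
      exact ne_top_of_le_ne_top (ENNReal.mul_ne_top (ENNReal.natCast_ne_top d) ih) (hcrec j)
  have htel : ∀ k, (1 : H →L[ℂ] H) - Θ^[k] 1 = ∑ j ∈ range k, D j := by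
    intro k
    have h := Finset.sum_range_sub' (fun j => Θ^[j] 1) k
    rw [Function.iterate_zero_apply] at h
    exact h.symm
  have hak : ∀ k, opTrace b (1 - Θ^[k] 1) = ∑ j ∈ range k, c j := by
    intro k
    rw [htel k, opTrace_range_sum b D hDpos k]
  have hafin : ∀ k, opTrace b (1 - Θ^[k] 1) ≠ ⊤ := by
    intro k; rw [hak]
    exact (ENNReal.sum_lt_top.mpr fun j _ => (hcfin j).lt_top).ne
  have hdR : (0 : ℝ) < d := by positivity
  set γ : ℕ → ℝ := fun j => (c j).toReal / (d : ℝ) ^ j with hγ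
  have hγ0 : ∀ j, 0 ≤ γ j := fun j => div_nonneg ENNReal.toReal_nonneg (by positivity)
  have hγanti : ∀ j, γ (j + 1) ≤ γ j := by
    intro j
    have h1 : (c (j + 1)).toReal ≤ (d : ℝ) * (c j).toReal := by
      have := ENNReal.toReal_mono (ENNReal.mul_ne_top (ENNReal.natCast_ne_top d) (hcfin j))
        (hcrec j)
      rwa [ENNReal.toReal_mul, ENNReal.toReal_natCast] at this
    show (c (j + 1)).toReal / (d : ℝ) ^ (j + 1) ≤ (c j).toReal / (d : ℝ) ^ j
    rw [pow_succ, div_le_div_iff₀ (by positivity) (by positivity)]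
    nlinarith [pow_pos hdR j, ENNReal.toReal_nonneg (a := c j),
      ENNReal.toReal_nonneg (a := c (j + 1))]
  have hγd : ∀ j, γ j * (d : ℝ) ^ j = (c j).toReal := fun j => div_mul_cancel₀ _ (by positivity)
  have hAk : ∀ k, (∑ j ∈ range k, γ j * (d : ℝ) ^ j) = (opTrace b (1 - Θ^[k] 1)).toReal := by
    intro k
    rw [hak k, ENNReal.toReal_sum (fun j _ => hcfin j)]
    exact Finset.sum_congr rfl fun j _ => hγd j
  obtain ⟨L, hL0, hLtend⟩ := weighted_avg_tendsto d hd2 γ hγ0 hγanti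
  have hSpos : ∀ k : ℕ, 1 ≤ k → 0 < ∑ j ∈ range k, (d : ℝ) ^ j := fun k hk =>
    Finset.sum_pos (fun j _ => by positivity) ⟨0, Finset.mem_range.mpr (by omega)⟩
  have hSE : ∀ k, (∑ j ∈ range k, (d : ℝ≥0∞) ^ j)
      = ENNReal.ofReal (∑ j ∈ range k, (d : ℝ) ^ j) := by
    intro k
    rw [ENNReal.ofReal_sum_of_nonneg (fun j _ => by positivity)]
    refine Finset.sum_congr rfl fun j _ => ?_
    rw [ENNReal.ofReal_pow (by positivity), ENNReal.ofReal_natCast]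
  refine ⟨ENNReal.ofReal L, ENNReal.ofReal_ne_top, ?_, ?_⟩
  · have hev : ∀ k : ℕ, 1 ≤ k →
        ENNReal.ofReal ((∑ j ∈ range k, γ j * (d : ℝ) ^ j) / ∑ j ∈ range k, (d : ℝ) ^ j)
          = opTrace b (1 - Θ^[k] 1) / ∑ j ∈ range k, (d : ℝ≥0∞) ^ j := by
      intro k hk
      rw [ENNReal.ofReal_div_of_pos (hSpos k hk), hSE k, hAk k,
        ENNReal.ofReal_toReal (hafin k)]
    exact (ENNReal.tendsto_ofReal hLtend).congr'
      (Filter.eventually_atTop.mpr ⟨1, fun k hk => hev k hk⟩)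
  · have hd1 : ((d : ℝ≥0∞) - 1) = ENNReal.ofReal ((d : ℝ) - 1) := by
      calc (d : ℝ≥0∞) - 1 = ((d : ℕ) : ℝ≥0∞) - ((1 : ℕ) : ℝ≥0∞) := by norm_num
        _ = (((d - 1 : ℕ)) : ℝ≥0∞) := (ENNReal.natCast_sub d 1).symm
        _ = ENNReal.ofReal (((d - 1 : ℕ)) : ℝ) := (ENNReal.ofReal_natCast _).symm
        _ = ENNReal.ofReal ((d : ℝ) - 1) := by rw [Nat.cast_sub (by omega)]; norm_num
    have hr2 : Filter.Tendsto
        (fun k => ((d : ℝ) - 1) * (∑ j ∈ range k, γ j * (d : ℝ) ^ j) / (d : ℝ) ^ k)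
        atTop (nhds L) := by
      have h0 : Filter.Tendsto (fun k : ℕ => ((d : ℝ)⁻¹) ^ k) atTop (nhds 0) := by
        apply tendsto_pow_atTop_nhds_zero_of_lt_one (by positivity)
        rw [inv_lt_one_iff₀]
        right
        exact_mod_cast by omega
      have hinv : Filter.Tendsto (fun k : ℕ => 1 - ((d : ℝ)⁻¹) ^ k) atTop (nhds 1) := by
        have := (tendsto_const_nhds (x := (1 : ℝ)) (f := atTop)).sub h0
        simpa using this
      have hmul := hLtend.mul hinv
      rw [mul_one] at hmul
      refine hmul.congr' (Filter.eventually_atTop.mpr ⟨1, fun k hk =>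
        ratio_eq d hd2 _ _ (ne_of_gt (hSpos k hk)) k (geom_sum_mul _ _)⟩)
    have heq2 : ∀ k : ℕ,
        ENNReal.ofReal (((d : ℝ) - 1) * (∑ j ∈ range k, γ j * (d : ℝ) ^ j) / (d : ℝ) ^ k)
          = ((d : ℝ≥0∞) - 1) * opTrace b (1 - Θ^[k] 1) / (d : ℝ≥0∞) ^ k := by
      intro k
      have hd1' : (0 : ℝ) ≤ (d : ℝ) - 1 := by
        have : (1 : ℝ) ≤ (d : ℝ) := by exact_mod_cast (by omega : 1 ≤ d)
        linarith
      rw [ENNReal.ofReal_div_of_pos (by positivity), ENNReal.ofReal_mul hd1', ← hd1,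
        hAk k, ENNReal.ofReal_toReal (hafin k),
        ENNReal.ofReal_pow (by positivity), ENNReal.ofReal_natCast]
    exact (ENNReal.tendsto_ofReal hr2).congr heq2
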